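/- The constants a, b, d in the cnoidal-wave ansatz φ_c(x) = a + b[dn²(dx;k) - E/K] solving c φ_c'' - (c-1)φ_c + (1/2)φ_c² = 0 with period L are determined by: d = 2K/L, b = 48cK²/L², aL² = -48cKE + 16K²c(2-k²) - cL² + L² (equivalently a is determined by the second system equation), and c must satisfy the quadratic [256K⁴(1-k²+k⁴) - L⁴]c² + 2cL⁴ - L⁴ = 0, whose roots are c = L²/(L² ± 16K²√(1-k²+k⁴)). -/

import Mathlib

/-!
Determination of the constants in the cnoidal-wave ansatz
  φ_c(x) = a + b[dn²(dx;k) − E/K]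
solving cφ'' − (c−1)φ + φ²/2 = 0 with period L.  Substituting the ansatz and
matching coefficients yields the 3×3 nonlinear system (with k'² = 1 − k²)
  b²/2 − 6cbd² = 0,
  4bd²c(1+k'²) + ab − b²E/K − (c−1)b = 0,
  a²/2 − abE/K + (b²/2)(E/K)² − (c−1)a + (c−1)bE/K − 2cbd²k'² = 0,
and, given the period condition d = 2K/L, it forces
  b = 48cK²/L²,  aL² = 48cKE − 16K²c(2−k²) + cL² − L²,
and c to be a root of  [256K⁴(1−k²+k⁴) − L⁴]c² + 2cL⁴ − L⁴ = 0, whose roots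
are c = L²/(L² ± 16K²√(1−k²+k⁴)).
Here K = K(k) > 0 and E = E(k) are the complete elliptic integrals.
-/

theorem cnoidal_constants (L c a b d k K E : ℝ)
    (hL : 0 < L) (hk : 0 < k) (hk1 : k < 1) (hK : 0 < K) (hb : b ≠ 0)
    (hd : d = 2 * K / L)
    (e1 : b ^ 2 / 2 - 6 * c * b * d ^ 2 = 0)
    (e2 : 4 * b * d ^ 2 * c * (1 + (1 - k ^ 2)) + a * b - b ^ 2 * (E / K) - (c - 1) * b = 0)
    (e3 : a ^ 2 / 2 - a * b * (E / K) + b ^ 2 / 2 * (E / K) ^ 2 - (c - 1) * a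
          + (c - 1) * b * (E / K) - 2 * c * b * d ^ 2 * (1 - k ^ 2) = 0) :
    b = 48 * c * K ^ 2 / L ^ 2 ∧
    a * L ^ 2 = 48 * c * K * E - 16 * K ^ 2 * c * (2 - k ^ 2) + c * L ^ 2 - L ^ 2 ∧
    (256 * K ^ 4 * (1 - k ^ 2 + k ^ 4) - L ^ 4) * c ^ 2 + 2 * c * L ^ 4 - L ^ 4 = 0 ∧
    (256 * K ^ 4 * (1 - k ^ 2 + k ^ 4) - L ^ 4 ≠ 0 →
      ∀ c' : ℝ,
        (256 * K ^ 4 * (1 - k ^ 2 + k ^ 4) - L ^ 4) * c' ^ 2 + 2 * c' * L ^ 4 - L ^ 4 = 0 ↔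
          (c' = L ^ 2 / (L ^ 2 + 16 * K ^ 2 * Real.sqrt (1 - k ^ 2 + k ^ 4)) ∨
           c' = L ^ 2 / (L ^ 2 - 16 * K ^ 2 * Real.sqrt (1 - k ^ 2 + k ^ 4)))) := by
  set_option maxHeartbeats 1000000 in
  have hL0 : L ≠ 0 := ne_of_gt hL
  have hK0 : K ≠ 0 := ne_of_gt hK
  subst hd
  have hb12 : b = 12 * c * (2 * K / L) ^ 2 := by
    have h : b * (b - 12 * c * (2 * K / L) ^ 2) = 0 := by linear_combination 2 * e1
    rcases mul_eq_zero.mp h with h | h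
    · exact absurd h hb
    · linarith
  have g1 : b = 48 * c * K ^ 2 / L ^ 2 := by
    rw [hb12]; field_simp; ring
  have ha : a = b * (E / K) + (c - 1) - 4 * (2 * K / L) ^ 2 * c * (2 - k ^ 2) := by
    have h : b * (a - (b * (E / K) + (c - 1) - 4 * (2 * K / L) ^ 2 * c * (2 - k ^ 2))) = 0 := by
      linear_combination e2
    rcases mul_eq_zero.mp h with h | h
    · exact absurd h hb
    · linarith
  have g2 : a * L ^ 2 = 48 * c * K * E - 16 * K ^ 2 * c * (2 - k ^ 2) + c * L ^ 2 - L ^ 2 := by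
    rw [ha, g1]; field_simp; ring
  have key : 16 * (2 * K / L) ^ 4 * c ^ 2 * (1 - k ^ 2 + k ^ 4) = (c - 1) ^ 2 := by
    rw [ha, hb12] at e3
    linear_combination 2 * e3
  have g3 : (256 * K ^ 4 * (1 - k ^ 2 + k ^ 4) - L ^ 4) * c ^ 2 + 2 * c * L ^ 4 - L ^ 4 = 0 := by
    have key' : 256 * K ^ 4 * c ^ 2 * (1 - k ^ 2 + k ^ 4) = (c - 1) ^ 2 * L ^ 4 := by
      have h4 : (L ^ 2) ^ 2 ≠ 0 := pow_ne_zero _ (pow_ne_zero _ hL0)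
      field_simp at key
      linear_combination key
    linear_combination key'
  refine ⟨g1, g2, g3, ?_⟩
  intro hD c'
  have hpos : (0:ℝ) < 1 - k ^ 2 + k ^ 4 := by nlinarith
  have hs2 : (Real.sqrt (1 - k ^ 2 + k ^ 4)) ^ 2 = 1 - k ^ 2 + k ^ 4 :=
    Real.sq_sqrt hpos.le
  set s : ℝ := Real.sqrt (1 - k ^ 2 + k ^ 4)
  have hDs : 256 * K ^ 4 * (1 - k ^ 2 + k ^ 4) - L ^ 4
      = -((L ^ 2 + 16 * K ^ 2 * s) * (L ^ 2 - 16 * K ^ 2 * s)) := by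
    linear_combination (-(256 * K ^ 4)) * hs2
  have hA : L ^ 2 + 16 * K ^ 2 * s ≠ 0 := fun h => hD (by rw [hDs, h]; ring)
  have hB : L ^ 2 - 16 * K ^ 2 * s ≠ 0 := fun h => hD (by rw [hDs, h]; ring)
  constructor
  · intro heq
    have hfac : ((L ^ 2 + 16 * K ^ 2 * s) * c' - L ^ 2) *
        ((L ^ 2 - 16 * K ^ 2 * s) * c' - L ^ 2) = 0 := by
      linear_combination -heq - 256 * K ^ 4 * c' ^ 2 * hs2
    rcases mul_eq_zero.mp hfac with h | h
    · left
      rw [eq_div_iff hA]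
      linarith
    · right
      rw [eq_div_iff hB]
      linarith
  · rintro (h | h) <;> rw [h]
    · have : (256 * K ^ 4 * (1 - k ^ 2 + k ^ 4) - L ^ 4) *
          (L ^ 2 / (L ^ 2 + 16 * K ^ 2 * s)) ^ 2 +
          2 * (L ^ 2 / (L ^ 2 + 16 * K ^ 2 * s)) * L ^ 4 - L ^ 4 = 0 := by
        rw [hDs]
        field_simp
        ring
      exact this
    · have : (256 * K ^ 4 * (1 - k ^ 2 + k ^ 4) - L ^ 4) *
          (L ^ 2 / (L ^ 2 - 16 * K ^ 2 * s)) ^ 2 +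
          2 * (L ^ 2 / (L ^ 2 - 16 * K ^ 2 * s)) * L ^ 4 - L ^ 4 = 0 := by
        rw [hDs]
        field_simp
        ring
      exact this
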